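/- Let t ∈ V₁ ⊗ V₂ ⊗ V₃ be a tensor over ℂ and let F: V₁ ⊗ V₂ ⊗ V₃ → V′₁ ⊗ V′₂ be a linear map. Then borderrank(t) ≥ rank(F(t)) / max rank(F(v₁ ⊗ v₂ ⊗ v₃)), where the maximum is over all simple tensors v₁ ⊗ v₂ ⊗ v₃ and rank on the right-hand side denotes matrix rank in V′₁ ⊗ V′₂. -/

import Mathlib

open scoped BigOperators

universe u v

noncomputable section

variable {F : Type v}

/-- Tensor rank: the least `r` such that `T` is a sum of `r` simple tensors. -/
def tRank {ι : Type*} [Fintype ι] [DecidableEq ι] {γ : ι → Type*} [∀ i, Fintype (γ i)]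
    [Field F] (T : (∀ i, γ i) → F) : ℕ :=
  sInf {r | ∃ v : Fin r → ∀ i, γ i → F, ∀ x, T x = ∑ j, ∏ i, v j i (x i)}

/-- Tensor product of a `ι`-indexed tensor and a `κ`-indexed tensor (no grouping). -/
def tProd [Field F] {ι κ : Type*} {γ : ι → Type u} {δ : κ → Type u}
    (S : (∀ i, γ i) → F) (T : (∀ j, δ j) → F) : (∀ i : ι ⊕ κ, Sum.elim γ δ i) → F :=
  fun x => S (fun i => x (Sum.inl i)) * T (fun j => x (Sum.inr j))

instance sumElimFintype {ι κ : Type*} {γ : ι → Type u} {δ : κ → Type u}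
    [hγ : ∀ i, Fintype (γ i)] [hδ : ∀ j, Fintype (δ j)] :
    ∀ i : ι ⊕ κ, Fintype (Sum.elim γ δ i)
  | Sum.inl i => hγ i
  | Sum.inr j => hδ j

/-- Tensor Kronecker product of two tensors with the same index set. -/
def tKron [Field F] {ι : Type*} {γ δ : ι → Type*}
    (S : (∀ i, γ i) → F) (T : (∀ i, δ i) → F) : (∀ i, γ i × δ i) → F :=
  fun x => S (fun i => (x i).1) * T (fun i => (x i).2)

/-- `n`-fold tensor product power of a tensor (no grouping), a tensor indexed by `Fin n × ι`. -/
def tPow [Field F] {ι : Type*} {γ : ι → Type*} (T : (∀ i, γ i) → F) (n : ℕ) :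
    (∀ p : Fin n × ι, γ p.2) → F :=
  fun x => ∏ j : Fin n, T (fun i => x (j, i))

/-- Restriction `t ≥ s`: `s` is obtained from `t` by applying linear maps on each factor. -/
def Restricts [Field F] {ι : Type*} [Fintype ι] [DecidableEq ι]
    {γ : ι → Type*} {δ : ι → Type*} [∀ i, Fintype (γ i)]
    (t : (∀ i, γ i) → F) (s : (∀ i, δ i) → F) : Prop :=
  ∃ A : ∀ i, δ i → γ i → F, ∀ x, (∑ y : ∀ i, γ i, (∏ i, A i (x i) (y i)) * t y) = s x

/-- Degeneration `t ⊵_d^e s` with approximation degree `d` and error degree `e`. -/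
def Degen [Field F] {ι : Type*} [Fintype ι] [DecidableEq ι]
    {γ : ι → Type*} {δ : ι → Type*} [∀ i, Fintype (γ i)]
    (t : (∀ i, γ i) → F) (s : (∀ i, δ i) → F) (d e : ℕ) : Prop :=
  ∃ A : ∀ i, δ i → γ i → Polynomial F, ∃ s' : Fin e → ((∀ i, δ i) → F),
    ∀ x, (∑ y : ∀ i, γ i, (∏ i, A i (x i) (y i)) * Polynomial.C (t y)) =
      Polynomial.C (s x) * Polynomial.X ^ d +
      ∑ j : Fin e, Polynomial.C (s' j x) * Polynomial.X ^ (d + 1 + (j : ℕ))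

/-- The rank-`r` order-`k` unit tensor `⟨r⟩_k = ∑_j b_j^{⊗k}`. -/
def unitTensor (F : Type v) [Field F] (r k : ℕ) : (Fin k → Fin r) → F :=
  fun x => ∑ j : Fin r, ∏ i : Fin k, if x i = j then 1 else 0

/-- The tensor `W_k = ∑_{type(i)=(k-1,1)} b_{i₁} ⊗ ⋯ ⊗ b_{i_k}` in `(F²)^{⊗k}`. -/
def Wtensor (F : Type v) [Field F] (k : ℕ) : (Fin k → Fin 2) → F :=
  fun x => if (∑ i, (x i : ℕ)) = 1 then 1 else 0

/-- `R^e(s)`: border rank with error degree at most `e`. -/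
def errRank [Field F] {k : ℕ} {γ : Fin k → Type*} [∀ i, Fintype (γ i)]
    (e : ℕ) (s : (∀ i, γ i) → F) : ℕ :=
  sInf {r | ∃ d, Degen (unitTensor F r k) s d e}

/-- `R_d(s)`: border rank with approximation degree `d`. -/
def degRank [Field F] {k : ℕ} {γ : Fin k → Type*} [∀ i, Fintype (γ i)]
    (d : ℕ) (s : (∀ i, γ i) → F) : ℕ :=
  sInf {r | ∃ e, Degen (unitTensor F r k) s d e}

/-- Border rank over ℂ: the least `r` such that `T` is a limit of tensors of rank `≤ r`. -/
def tBorderRank {ι : Type*} [Fintype ι] [DecidableEq ι] {γ : ι → Type*} [∀ i, Fintype (γ i)]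
    (T : (∀ i, γ i) → ℂ) : ℕ :=
  sInf {r | T ∈ closure {T' : (∀ i, γ i) → ℂ | tRank T' ≤ r}}

end

open Matrix Module Submodule

section AuxRank

variable {α β : Type*} [Fintype α] [Fintype β] [DecidableEq α] [DecidableEq β]

lemma flb_rank_add_le (A B : Matrix α β ℂ) : (A + B).rank ≤ A.rank + B.rank := by
  rw [Matrix.rank, Matrix.rank, Matrix.rank, Matrix.mulVecLin_add]
  have h : LinearMap.range (A.mulVecLin + B.mulVecLin) ≤
      LinearMap.range A.mulVecLin ⊔ LinearMap.range B.mulVecLin := by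
    rintro x ⟨y, rfl⟩
    exact Submodule.mem_sup.2 ⟨_, ⟨y, rfl⟩, _, ⟨y, rfl⟩, rfl⟩
  exact (Submodule.finrank_mono h).trans
    (Submodule.finrank_add_le_finrank_add_finrank _ _)

lemma flb_rank_sum_le {J : Type*} (s : Finset J) (f : J → Matrix α β ℂ) :
    (∑ j ∈ s, f j).rank ≤ ∑ j ∈ s, (f j).rank := by
  classical
  induction s using Finset.induction with
  | empty => simp
  | insert _ _ h ih =>
    rw [Finset.sum_insert h, Finset.sum_insert h]
    exact (flb_rank_add_le _ _).trans (add_le_add_right ih _)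

lemma flb_exists_linIndep {M : Type*} [AddCommGroup M] [Module ℂ M]
    {ι : Type*} [Fintype ι] (f : ι → M) (r : ℕ)
    (h : r ≤ finrank ℂ (span ℂ (Set.range f))) :
    ∃ g : Fin r → ι, LinearIndependent ℂ (f ∘ g) := by
  obtain ⟨s, hsub, hspan, hind⟩ := exists_linearIndependent ℂ (Set.range f)
  have hfin : s.Finite := (Set.finite_range f).subset hsub
  haveI := hfin.fintype
  have hcard : finrank ℂ (span ℂ (Set.range f)) = s.toFinset.card := by
    rw [← hspan, finrank_span_set_eq_card hind]
  rw [hcard, Set.toFinset_card] at h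
  obtain ⟨e⟩ : Nonempty (Fin r ↪ s) :=
    Function.Embedding.nonempty_of_card_le (by simpa using h)
  have hi : LinearIndependent ℂ (fun j : Fin r => ((e j : M))) :=
    hind.comp e e.injective
  choose g hg using fun j : Fin r => hsub (e j).2
  refine ⟨g, ?_⟩
  have : f ∘ g = fun j => ((e j : M)) := funext fun j => hg j
  rw [this]
  exact hi

lemma flb_exists_minor (A : Matrix α β ℂ) (r : ℕ) (h : r ≤ A.rank) :
    ∃ (f : Fin r → α) (g : Fin r → β), (A.submatrix f g).det ≠ 0 := by
  rw [Matrix.rank_eq_finrank_span_cols] at h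
  obtain ⟨g, hg⟩ := flb_exists_linIndep Aᵀ r h
  set B := A.submatrix id g with hB
  have hBT : Bᵀ = Aᵀ ∘ g := rfl
  have hrB : B.rank = r := by
    rw [Matrix.rank_eq_finrank_span_cols, Matrix.col, hBT, finrank_span_eq_card hg, Fintype.card_fin]
  have hrBT : r ≤ Bᵀ.rank := by rw [Matrix.rank_transpose, hrB]
  rw [Matrix.rank_eq_finrank_span_cols, Matrix.col, Matrix.transpose_transpose] at hrBT
  obtain ⟨f, hf⟩ := flb_exists_linIndep (fun a : α => B a) r hrBT
  set S := B.submatrix f id with hS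
  have hST : Sᵀᵀ = (fun a : α => B a) ∘ f := rfl
  have hrS : Sᵀ.rank = r := by
    rw [Matrix.rank_eq_finrank_span_cols, Matrix.col, hST, finrank_span_eq_card hf, Fintype.card_fin]
  rw [Matrix.rank_transpose] at hrS
  have hsurj : Function.Surjective S.mulVec := by
    rw [← Matrix.coe_mulVecLin, ← LinearMap.range_eq_top]
    apply Submodule.eq_top_of_finrank_eq
    rw [← Matrix.rank, hrS, finrank_pi]
    simp
  have hunit : IsUnit S := Matrix.mulVec_surjective_iff_isUnit.mp hsurj
  refine ⟨f, g, ?_⟩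
  have : S = A.submatrix f g := rfl
  rw [← this]
  exact ((Matrix.isUnit_iff_isUnit_det S).mp hunit).ne_zero

lemma flb_rank_of_minor (A : Matrix α β ℂ) (r : ℕ)
    (f : Fin r → α) (g : Fin r → β) (h : (A.submatrix f g).det ≠ 0) :
    r ≤ A.rank := by
  set P : Matrix (Fin r) α ℂ := Matrix.of fun i a => if a = f i then 1 else 0 with hP
  set Q : Matrix β (Fin r) ℂ := Matrix.of fun b j => if b = g j then 1 else 0 with hQ
  have hPAQ : P * A * Q = A.submatrix f g := by
    ext i j
    simp [Matrix.mul_apply, hP, hQ, ite_mul, mul_ite]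
  have hunit : IsUnit (A.submatrix f g) :=
    (Matrix.isUnit_iff_isUnit_det _).mpr (isUnit_iff_ne_zero.mpr h)
  have : (A.submatrix f g).rank = r := by
    rw [Matrix.rank_of_isUnit _ hunit, Fintype.card_fin]
  calc r = (P * A * Q).rank := by rw [hPAQ, this]
    _ ≤ (P * A).rank := Matrix.rank_mul_le_left _ _
    _ ≤ A.rank := Matrix.rank_mul_le_right _ _

lemma flb_isClosed_rank_le (k : ℕ) :
    IsClosed {A : Matrix α β ℂ | A.rank ≤ k} := by
  rw [← isOpen_compl_iff]
  have : {A : Matrix α β ℂ | A.rank ≤ k}ᶜ =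
      ⋃ (f : Fin (k+1) → α) (g : Fin (k+1) → β),
        {A : Matrix α β ℂ | (A.submatrix f g).det ≠ 0} := by
    ext A
    simp only [Set.mem_compl_iff, Set.mem_setOf_eq, not_le, Set.mem_iUnion]
    constructor
    · intro hlt
      exact flb_exists_minor A (k+1) hlt
    · rintro ⟨f, g, hfg⟩
      exact flb_rank_of_minor A (k+1) f g hfg
  rw [this]
  exact isOpen_iUnion fun f => isOpen_iUnion fun g =>
    (isOpen_compl_singleton).preimage (continuous_id.matrix_submatrix f g).matrix_det

end AuxRank

theorem flattening_lower_bound {γ : Fin 3 → Type u} [∀ i, Fintype (γ i)]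
    {α β : Type*} [Fintype α] [Fintype β] [DecidableEq α] [DecidableEq β]
    (t : (∀ i, γ i) → ℂ)
    (Fl : ((∀ i, γ i) → ℂ) →ₗ[ℂ] Matrix α β ℂ) :
    (Matrix.rank (Fl t) : ℝ) /
        (↑(sSup {m : ℕ | ∃ v : ∀ i, γ i → ℂ,
            Matrix.rank (Fl (fun x => ∏ i, v i (x i))) = m}) : ℝ)
      ≤ (tBorderRank t : ℝ) := by
  classical
  set Mset := {m : ℕ | ∃ v : ∀ i, γ i → ℂ,
      Matrix.rank (Fl (fun x => ∏ i, v i (x i))) = m} with hMset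
  set Mv := sSup Mset with hMv
  have hbdd : BddAbove Mset := by
    refine ⟨Fintype.card α, ?_⟩
    rintro m ⟨v, rfl⟩
    exact Matrix.rank_le_card_height _
  set R := tBorderRank t with hR
  -- t is in the closure of tensors of rank ≤ R
  have hmem : t ∈ closure {T' : (∀ i, γ i) → ℂ | tRank T' ≤ R} := by
    have hne : {r | t ∈ closure {T' : (∀ i, γ i) → ℂ | tRank T' ≤ r}}.Nonempty :=
      ⟨tRank t, subset_closure (Set.mem_setOf.mpr le_rfl)⟩
    exact Nat.sInf_mem hne
  -- every tensor of rank ≤ R flattens to a matrix of rank ≤ R * Mv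
  have hdelta : ∀ (x y : ∀ i, γ i),
      (∏ i, if x i = y i then (1 : ℂ) else 0) = if x = y then 1 else 0 := by
    intro x y
    by_cases hxy : x = y
    · simp [hxy]
    · obtain ⟨i, hi⟩ := Function.ne_iff.mp hxy
      rw [if_neg hxy]
      exact Finset.prod_eq_zero (Finset.mem_univ i) (if_neg hi)
  have stepA : ∀ T' : (∀ i, γ i) → ℂ, tRank T' ≤ R → (Fl T').rank ≤ R * Mv := by
    intro T' hT'
    have hne : {r | ∃ v : Fin r → ∀ i, γ i → ℂ,
        ∀ x, T' x = ∑ j, ∏ i, v j i (x i)}.Nonempty := by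
      set N := Fintype.card (∀ i, γ i) with hN
      set e : Fin N ≃ (∀ i, γ i) := (Fintype.equivFin _).symm with he
      refine ⟨N, fun j i c => (if c = e j i then 1 else 0) *
        (if i = 0 then T' (e j) else 1), fun x => ?_⟩
      have : ∀ j : Fin N, (∏ i, (if x i = e j i then (1:ℂ) else 0) *
          (if i = 0 then T' (e j) else 1)) = (if x = e j then 1 else 0) * T' (e j) := by
        intro j
        rw [Finset.prod_mul_distrib, hdelta x (e j)]
        congr 1
        simp [Fin.prod_univ_three]
      simp only [this]
      rw [← Equiv.sum_comp e.symm (fun j => (if x = e j then (1:ℂ) else 0) * T' (e j))]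
      simp
    obtain ⟨v, hv⟩ := Nat.sInf_mem hne
    have hr0 : tRank T' ≤ R := hT'
    have hT : T' = ∑ j : Fin (tRank T'), (fun x => ∏ i, v j i (x i)) := by
      funext x
      rw [Finset.sum_apply]
      exact hv x
    rw [hT, map_sum]
    calc (∑ j : Fin (tRank T'), Fl (fun x => ∏ i, v j i (x i))).rank
        ≤ ∑ j : Fin (tRank T'), (Fl (fun x => ∏ i, v j i (x i))).rank :=
          flb_rank_sum_le _ _
      _ ≤ ∑ _j : Fin (tRank T'), Mv :=
          Finset.sum_le_sum fun j _ => le_csSup hbdd ⟨v j, rfl⟩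
      _ = tRank T' * Mv := by simp [Finset.sum_const, mul_comm]
      _ ≤ R * Mv := Nat.mul_le_mul_right _ hr0
  have hclosed : IsClosed {T' : (∀ i, γ i) → ℂ | (Fl T').rank ≤ R * Mv} :=
    (flb_isClosed_rank_le (α := α) (β := β) (R * Mv)).preimage
      Fl.continuous_of_finiteDimensional
  have hkey : (Fl t).rank ≤ R * Mv :=
    closure_minimal (fun T' h => stepA T' h) hclosed hmem
  rcases Nat.eq_zero_or_pos Mv with h0 | hpos
  · rw [h0]
    simp
  · rw [div_le_iff₀ (by exact_mod_cast hpos)]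
    exact_mod_cast hkey
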